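/- Let Q be any (N+1)×(N+1) real matrix, V_f any 2×(N+1) real matrix with rows t_Lᵀ, t_Rᵀ, B = diag(-1,1), e_L = (1,0)ᵀ, e_R = (0,1)ᵀ, and S = Q - (1/2)V_fᵀ B V_f. Let Q_h be the 2(N+3)×2(N+3) two-element decoupled matrix with blocks ordered as (element-1 volume nodes, element-1 face nodes, element-2 volume nodes, element-2 face nodes): Q_h = [[S, (1/2)V_fᵀB, 0, 0],[-(1/2)BV_f, -(1/2)e_L e_Lᵀ, 0, (1/2)e_R e_Lᵀ],[0, 0, S, (1/2)V_fᵀB],[0, -(1/2)e_L e_Rᵀ, -(1/2)BV_f, (1/2)e_R e_Rᵀ]], and let I_h = blockdiag([I_{N+1}; V_f], [I_{N+1}; V_f]) be the 2(N+3)×2(N+1) block interpolation matrix. Then I_hᵀ Q_h I_h = [[S, (1/2)t_R t_Lᵀ],[-(1/2)t_L t_Rᵀ, S]] + blockdiag(-(1/2)t_L t_Lᵀ, (1/2)t_R t_Rᵀ), i.e., the decoupled two-element operator reduces under interpolation to the coupled generalized-SBP two-element operator. -/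

import Mathlib

open Matrix BigOperators

lemma aux_mul_vecMulVec {m n p : Type*} [Fintype n] (A : Matrix m n ℝ) (u : n → ℝ) (v : p → ℝ) :
    A * Matrix.vecMulVec u v = Matrix.vecMulVec (A *ᵥ u) v := by
  ext i j
  simp [Matrix.mul_apply, Matrix.vecMulVec_apply, Matrix.mulVec, dotProduct,
    Finset.sum_mul, mul_assoc]

lemma aux_vecMulVec_mul {m n p : Type*} [Fintype n] (u : m → ℝ) (v : n → ℝ) (A : Matrix n p ℝ) :
    Matrix.vecMulVec u v * A = Matrix.vecMulVec u (v ᵥ* A) := by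
  ext i j
  simp [Matrix.mul_apply, Matrix.vecMulVec_apply, Matrix.vecMul, dotProduct,
    Finset.mul_sum, mul_assoc]

lemma aux_sandwich {n : ℕ} (Vf : Matrix (Fin 2) (Fin n) ℝ)
    (A11 : Matrix (Fin n) (Fin n) ℝ) (A12 : Matrix (Fin n) (Fin 2) ℝ)
    (A21 : Matrix (Fin 2) (Fin n) ℝ) (A22 : Matrix (Fin 2) (Fin 2) ℝ) :
    (Matrix.fromRows (1 : Matrix (Fin n) (Fin n) ℝ) Vf)ᵀ *
        Matrix.fromBlocks A11 A12 A21 A22 *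
        Matrix.fromRows (1 : Matrix (Fin n) (Fin n) ℝ) Vf
      = A11 + A12 * Vf + Vfᵀ * A21 + Vfᵀ * A22 * Vf := by
  rw [Matrix.transpose_fromRows, Matrix.transpose_one, Matrix.fromCols_mul_fromBlocks,
    Matrix.fromCols_mul_fromRows]
  simp [Matrix.add_mul, Matrix.mul_assoc]
  abel

/-- The two-element decoupled operator `Q_h` reduces under the block interpolation matrix
`I_h = blockdiag([I; V_f], [I; V_f])` to the coupled generalized-SBP two-element operator:
`I_hᵀ Q_h I_h = [[S, (1/2) t_R t_Lᵀ], [-(1/2) t_L t_Rᵀ, S]]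
  + blockdiag(-(1/2) t_L t_Lᵀ, (1/2) t_R t_Rᵀ)`. -/
theorem decoupled_reduces_to_coupled
    (N : ℕ)
    (Q : Matrix (Fin (N + 1)) (Fin (N + 1)) ℝ)
    (Vf : Matrix (Fin 2) (Fin (N + 1)) ℝ)
    (B : Matrix (Fin 2) (Fin 2) ℝ)
    (hB : B = Matrix.diagonal ![(-1 : ℝ), 1])
    (tL tR : Fin (N + 1) → ℝ)
    (htL : ∀ j, tL j = Vf 0 j) (htR : ∀ j, tR j = Vf 1 j)
    (eL eR : Fin 2 → ℝ)
    (heL : eL = ![1, 0]) (heR : eR = ![0, 1])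
    (S : Matrix (Fin (N + 1)) (Fin (N + 1)) ℝ)
    (hS : S = Q - (1 / 2 : ℝ) • (Vfᵀ * B * Vf))
    (Qh : Matrix ((Fin (N + 1) ⊕ Fin 2) ⊕ (Fin (N + 1) ⊕ Fin 2))
                 ((Fin (N + 1) ⊕ Fin 2) ⊕ (Fin (N + 1) ⊕ Fin 2)) ℝ)
    (hQh : Qh = Matrix.fromBlocks
      (Matrix.fromBlocks S ((1 / 2 : ℝ) • (Vfᵀ * B))
        (-((1 / 2 : ℝ) • (B * Vf))) (-((1 / 2 : ℝ) • Matrix.vecMulVec eL eL)))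
      (Matrix.fromBlocks 0 0 0 ((1 / 2 : ℝ) • Matrix.vecMulVec eR eL))
      (Matrix.fromBlocks 0 0 0 (-((1 / 2 : ℝ) • Matrix.vecMulVec eL eR)))
      (Matrix.fromBlocks S ((1 / 2 : ℝ) • (Vfᵀ * B))
        (-((1 / 2 : ℝ) • (B * Vf))) ((1 / 2 : ℝ) • Matrix.vecMulVec eR eR)))
    (Ih : Matrix ((Fin (N + 1) ⊕ Fin 2) ⊕ (Fin (N + 1) ⊕ Fin 2))
                 (Fin (N + 1) ⊕ Fin (N + 1)) ℝ)
    (hIh : Ih = Matrix.fromBlocks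
      (Matrix.fromRows (1 : Matrix (Fin (N + 1)) (Fin (N + 1)) ℝ) Vf) 0
      0 (Matrix.fromRows (1 : Matrix (Fin (N + 1)) (Fin (N + 1)) ℝ) Vf)) :
    Ihᵀ * Qh * Ih
      = Matrix.fromBlocks
          S ((1 / 2 : ℝ) • Matrix.vecMulVec tR tL)
          (-((1 / 2 : ℝ) • Matrix.vecMulVec tL tR)) S
        + Matrix.fromBlocks (-((1 / 2 : ℝ) • Matrix.vecMulVec tL tL)) 0 0
            ((1 / 2 : ℝ) • Matrix.vecMulVec tR tR) := by
  have htL' : tL = fun j => Vf 0 j := funext htL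
  have htR' : tR = fun j => Vf 1 j := funext htR
  have hVeL : Vfᵀ *ᵥ eL = tL := by
    ext j
    simp [heL, htL' , Matrix.mulVec, dotProduct, Fin.sum_univ_two]
  have hVeR : Vfᵀ *ᵥ eR = tR := by
    ext j
    simp [heR, htR', Matrix.mulVec, dotProduct, Fin.sum_univ_two]
  have heLV : eL ᵥ* Vf = tL := by
    ext j
    simp [heL, htL', Matrix.vecMul, dotProduct, Fin.sum_univ_two]
  have heRV : eR ᵥ* Vf = tR := by
    ext j
    simp [heR, htR', Matrix.vecMul, dotProduct, Fin.sum_univ_two]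
  subst hQh hIh
  rw [Matrix.fromBlocks_transpose, Matrix.transpose_zero, Matrix.fromBlocks_multiply,
    Matrix.fromBlocks_multiply]
  simp only [Matrix.zero_mul, Matrix.mul_zero, add_zero, zero_add, aux_sandwich]
  rw [Matrix.fromBlocks_add, Matrix.fromBlocks_inj]
  refine ⟨?_, ?_, ?_, ?_⟩ <;>
    simp [Matrix.smul_mul, Matrix.mul_smul, Matrix.mul_neg, Matrix.neg_mul,
      aux_mul_vecMulVec, aux_vecMulVec_mul, hVeL, hVeR, heLV, heRV, Matrix.mul_assoc] <;>
    abel
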